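/- Let S be a string of length n over an alphabet with a sentinel, and define pss(j) = max{k ∈ [0,j) : S_k ≺ S_j} where S_0 is the sentinel suffix smaller than all others. If pss(j) = i > 0, then the substring S[i..j) is a Lyndon word. -/

import Mathlib

variable {α : Type*} [LinearOrder α]

/-- A Lyndon word: nonempty and strictly smaller than all of its proper nonempty suffixes. -/
def IsLyndon (s : List α) : Prop :=
  s ≠ [] ∧ ∀ i, 0 < i → i < s.length → List.Lex (· < ·) s (s.drop i)

/-- The `i`-th suffix of `S` (1-indexed); `sfx S 0 = []` plays the role of the sentinel
suffix `S₀ = $`, and `sfx S (n+1) = []` plays the role of `S_{n+1} = $`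
(the empty list is lexicographically smaller than every nonempty list). -/
def sfx (S : List α) (i : ℕ) : List α := if i = 0 then [] else S.drop (i - 1)

open scoped Classical in
/-- `pss S j = max {k ∈ [0,j) : S_k ≺ S_j}`. -/
noncomputable def pss (S : List α) (j : ℕ) : ℕ :=
  Nat.findGreatest (fun k => List.Lex (· < ·) (sfx S k) (sfx S j)) (j - 1)

/-- `nss S i = min {j ∈ (i, n+1] : S_j ≺ S_i}`. -/
noncomputable def nss (S : List α) (i : ℕ) : ℕ :=
  sInf {j | i < j ∧ j ≤ S.length + 1 ∧ List.Lex (· < ·) (sfx S j) (sfx S i)}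

/-- Length of the longest common prefix of two lists. -/
def lcp : List α → List α → ℕ
  | a :: s, b :: t => if a = b then lcp s t + 1 else 0
  | _, _ => 0

/-- The PSS closure: all iterates of `pss` starting from `j`. -/
noncomputable def pssClosure (S : List α) (j : ℕ) : Set ℕ :=
  {k | ∃ m, (pss S)^[m] j = k}

open scoped Classical in
/-- Size of the subtree of node `i` in the PSS tree of `S`. -/
noncomputable def subtreeSize (S : List α) (i : ℕ) : ℕ :=
  ((Finset.range (S.length + 1)).filter
    (fun j => j = i ∨ ∃ m, 0 < m ∧ (pss S)^[m] j = i)).card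

open scoped Classical in
/-- `lam S i`: length of the longest Lyndon word starting at position `i` (1-indexed). -/
noncomputable def lam (S : List α) (i : ℕ) : ℕ :=
  Nat.findGreatest (fun ℓ => IsLyndon ((S.drop (i - 1)).take ℓ)) (S.length + 1 - i)

lemma lex_append_cancel_left : ∀ (x y z : List α),
    List.Lex (· < ·) (x ++ y) (x ++ z) → List.Lex (· < ·) y z
  | [], _, _, h => h
  | a :: x, y, z, h => by
    cases h with
    | cons h => exact lex_append_cancel_left x y z h
    | rel h => exact absurd h (lt_irrefl a)

lemma lex_append_or_prefix (z : List α) : ∀ {u w : List α}, List.Lex (· < ·) u w →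
    List.Lex (· < ·) (u ++ z) (w ++ z) ∨ ∃ v, w = u ++ v := by
  intro u w h
  induction h with
  | nil => exact Or.inr ⟨_, rfl⟩
  | @cons a s t h ih =>
    rcases ih with h' | ⟨v, rfl⟩
    · exact Or.inl (List.Lex.cons h')
    · exact Or.inr ⟨v, rfl⟩
  | rel h => exact Or.inl (List.Lex.rel h)

lemma lex_total : ∀ u w : List α,
    List.Lex (· < ·) u w ∨ u = w ∨ List.Lex (· < ·) w u
  | [], [] => Or.inr (Or.inl rfl)
  | [], _ :: _ => Or.inl List.Lex.nil
  | _ :: _, [] => Or.inr (Or.inr List.Lex.nil)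
  | a :: s, b :: t => by
    rcases lt_trichotomy a b with h | rfl | h
    · exact Or.inl (List.Lex.rel h)
    · rcases lex_total s t with h | h | h
      · exact Or.inl (List.Lex.cons h)
      · exact Or.inr (Or.inl (by rw [h]))
      · exact Or.inr (Or.inr (List.Lex.cons h))
    · exact Or.inr (Or.inr (List.Lex.rel h))

lemma lex_trans' {a b c : List α} (h1 : List.Lex (· < ·) a b) (h2 : List.Lex (· < ·) b c) :
    List.Lex (· < ·) a c :=
  List.lex_trans (fun h h' => lt_trans h h') h1 h2

/-- if `pss j = i > 0` then `S[i..j)` is a Lyndon word. -/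
theorem stmt2 (S : List α) (i j : ℕ) (hj1 : 1 ≤ j) (hjn : j ≤ S.length)
    (hpss : pss S j = i) (hi : 0 < i) :
    IsLyndon ((S.drop (i - 1)).take (j - i)) := by
  classical
  unfold pss at hpss
  have hij : i ≤ j - 1 := by rw [← hpss]; exact Nat.findGreatest_le _
  have hij' : i < j := by omega
  have hPi : List.Lex (· < ·) (sfx S i) (sfx S j) :=
    Nat.findGreatest_of_ne_zero hpss (by omega)
  have hmax : ∀ k, i < k → k ≤ j - 1 →
      ¬ List.Lex (· < ·) (sfx S k) (sfx S j) := by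
    intro k hk1 hk2
    exact Nat.findGreatest_is_greatest (by rw [hpss]; omega) hk2
  have hsfxi : sfx S i = S.drop (i - 1) := by
    simp only [sfx, if_neg (show i ≠ 0 by omega)]
  have hsfxj : sfx S j = S.drop (j - 1) := by
    simp only [sfx, if_neg (show j ≠ 0 by omega)]
  set D : List α := S.drop (j - 1) with hD
  set w : List α := (S.drop (i - 1)).take (j - i) with hw
  have hwlen : w.length = j - i := by
    rw [hw, List.length_take, List.length_drop]; omega
  have hwi : S.drop (i - 1) = w ++ D := by
    rw [hw, hD]
    have h1 : j - 1 = (i - 1) + (j - i) := by omega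
    rw [h1, ← List.drop_drop]
    exact (List.take_append_drop _ _).symm
  refine ⟨by rw [← List.length_pos_iff_ne_nil, hwlen]; omega, ?_⟩
  intro t ht htw
  rw [hwlen] at htw
  set u : List α := w.drop t with hu
  have hulen : u.length = j - i - t := by
    rw [hu, List.length_drop, hwlen]
  have huS : u = (S.drop (i + t - 1)).take (j - i - t) := by
    have e1 : j - i - t = j - i - t := rfl
    have e2 : i - 1 + t = i + t - 1 := by omega
    rw [hu, hw, List.drop_take, List.drop_drop, e2]
  have hui : S.drop (i + t - 1) = u ++ D := by
    rw [huS, hD]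
    have h1 : j - 1 = (i + t - 1) + (j - i - t) := by omega
    rw [h1, ← List.drop_drop]
    exact (List.take_append_drop _ _).symm
  have hPi' : List.Lex (· < ·) (w ++ D) D := by
    rw [← hwi, ← hsfxi, ← hsfxj]; exact hPi
  have hmaxit : ¬ List.Lex (· < ·) (u ++ D) D := by
    rw [← hui]
    have h2 : sfx S (i + t) = S.drop (i + t - 1) := by
      simp only [sfx, if_neg (show i + t ≠ 0 by omega)]
    rw [← h2, ← hsfxj]
    exact hmax (i + t) (by omega) (by omega)
  by_contra hcon
  have hne : u ≠ w := by
    intro h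
    have := congrArg List.length h
    rw [hulen, hwlen] at this
    omega
  have huw : List.Lex (· < ·) u w := by
    rcases lex_total u w with h | h | h
    · exact h
    · exact absurd h hne
    · exact absurd h hcon
  rcases lex_append_or_prefix D huw with h | ⟨v, hv⟩
  · exact hmaxit (lex_trans' h hPi')
  · have hv' : v = w.drop u.length := by simp [hv]
    rw [hulen] at hv'
    have hvS : v = (S.drop (j - t - 1)).take t := by
      have e1 : j - i - (j - i - t) = t := by omega
      have e2 : i - 1 + (j - i - t) = j - t - 1 := by omega
      rw [hv', hw, List.drop_take, List.drop_drop, e1, e2]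
    have hvD : S.drop (j - t - 1) = v ++ D := by
      rw [hvS, hD]
      have h1 : j - 1 = (j - t - 1) + t := by omega
      rw [h1, ← List.drop_drop]
      exact (List.take_append_drop _ _).symm
    have hmaxjt : ¬ List.Lex (· < ·) (v ++ D) D := by
      rw [← hvD]
      have h2 : sfx S (j - t) = S.drop (j - t - 1) := by
        simp only [sfx, if_neg (show j - t ≠ 0 by omega)]
      rw [← h2, ← hsfxj]
      exact hmax (j - t) (by omega) (by omega)
    have hDu : List.Lex (· < ·) D (u ++ D) := by
      rcases lex_total D (u ++ D) with h' | h' | h'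
      · exact h'
      · exfalso
        have := congrArg List.length h'
        rw [List.length_append, hulen, hD, List.length_drop] at this
        omega
      · exact absurd h' hmaxit
    have hkey : List.Lex (· < ·) (u ++ (v ++ D)) (u ++ D) := by
      rw [← List.append_assoc, ← hv]
      exact lex_trans' hPi' hDu
    exact hmaxjt (lex_append_cancel_left _ _ _ hkey)
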